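/- In sl(3) (3×3 traceless matrices with matrix units E_{ij} and H_{13} = E_{11} - E_{33}), the element r_j = H_{13} ∧ E_{13} + 2 E_{12} ∧ E_{23} satisfies the classical Yang–Baxter equation [r_{12}, r_{13}] + [r_{12}, r_{23}] + [r_{13}, r_{23}] = 0. -/

import Mathlib

/- STATEMENT 3: In sl(3) (traceless 3×3 matrices, matrix units E_{ij},
H₁₃ = E₁₁ - E₃₃), the jordanian element r_j = H₁₃ ∧ E₁₃ + 2 E₁₂ ∧ E₂₃
(where a ∧ b = a ⊗ b - b ⊗ a) satisfies the classical Yang–Baxter equation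
[r₁₂,r₁₃] + [r₁₂,r₂₃] + [r₁₃,r₂₃] = 0 in U(sl(3))^{⊗3}. -/

open scoped TensorProduct

noncomputable section

attribute [local instance 100] LieRing.ofAssociativeRing

abbrev gl3 := Matrix (Fin 3) (Fin 3) ℚ
abbrev U3 := UniversalEnvelopingAlgebra ℚ gl3

noncomputable def ι3 : gl3 → U3 := fun a => UniversalEnvelopingAlgebra.ι ℚ a

noncomputable def p12 : U3 ⊗[ℚ] U3 →ₐ[ℚ] (U3 ⊗[ℚ] U3) ⊗[ℚ] U3 :=
  Algebra.TensorProduct.includeLeft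

noncomputable def p13 : U3 ⊗[ℚ] U3 →ₐ[ℚ] (U3 ⊗[ℚ] U3) ⊗[ℚ] U3 :=
  Algebra.TensorProduct.map Algebra.TensorProduct.includeLeft (AlgHom.id ℚ U3)

noncomputable def p23 : U3 ⊗[ℚ] U3 →ₐ[ℚ] (U3 ⊗[ℚ] U3) ⊗[ℚ] U3 :=
  Algebra.TensorProduct.map Algebra.TensorProduct.includeRight (AlgHom.id ℚ U3)


lemma brk1213 (x y z w : U3) :
    ⁅p12 (x ⊗ₜ[ℚ] y), p13 (z ⊗ₜ[ℚ] w)⁆ = ((x*z - z*x) ⊗ₜ[ℚ] y) ⊗ₜ[ℚ] w := by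
  simp [p12, p13, Ring.lie_def, Algebra.TensorProduct.tmul_mul_tmul,
    TensorProduct.sub_tmul]

lemma brk1223 (x y z w : U3) :
    ⁅p12 (x ⊗ₜ[ℚ] y), p23 (z ⊗ₜ[ℚ] w)⁆ = (x ⊗ₜ[ℚ] (y*z - z*y)) ⊗ₜ[ℚ] w := by
  simp [p12, p23, Ring.lie_def, Algebra.TensorProduct.tmul_mul_tmul,
    TensorProduct.tmul_sub, TensorProduct.sub_tmul]

lemma brk1323 (x y z w : U3) :
    ⁅p13 (x ⊗ₜ[ℚ] y), p23 (z ⊗ₜ[ℚ] w)⁆ = (x ⊗ₜ[ℚ] z) ⊗ₜ[ℚ] (y*w - w*y) := by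
  simp [p13, p23, Ring.lie_def, Algebra.TensorProduct.tmul_mul_tmul,
    TensorProduct.tmul_sub]

lemma comm3 (a b : gl3) : ι3 a * ι3 b - ι3 b * ι3 a = ι3 ⁅a, b⁆ := by
  have := (UniversalEnvelopingAlgebra.ι ℚ (L := gl3)).map_lie a b
  simpa [ι3, Ring.lie_def] using this.symm

lemma ι3_add (a b : gl3) : ι3 (a + b) = ι3 a + ι3 b := by simp [ι3]
lemma ι3_sub (a b : gl3) : ι3 (a - b) = ι3 a - ι3 b := by simp [ι3]
lemma ι3_smul (c : ℚ) (a : gl3) : ι3 (c • a) = c • ι3 a := by simp [ι3]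
lemma ι3_neg (a : gl3) : ι3 (-a) = - ι3 a := by simp [ι3]
lemma ι3_zero : ι3 (0 : gl3) = 0 := by simp [ι3]

lemma p12_smul (c : ℚ) (x : U3 ⊗[ℚ] U3) : p12 (c • x) = c • p12 x := by
  rw [Algebra.smul_def, map_mul, AlgHom.commutes, ← Algebra.smul_def]
lemma p13_smul (c : ℚ) (x : U3 ⊗[ℚ] U3) : p13 (c • x) = c • p13 x := by
  rw [Algebra.smul_def, map_mul, AlgHom.commutes, ← Algebra.smul_def]
lemma p23_smul (c : ℚ) (x : U3 ⊗[ℚ] U3) : p23 (c • x) = c • p23 x := by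
  rw [Algebra.smul_def, map_mul, AlgHom.commutes, ← Algebra.smul_def]

lemma sub_lie' (x y z : (U3 ⊗[ℚ] U3) ⊗[ℚ] U3) : ⁅x - y, z⁆ = ⁅x,z⁆ - ⁅y,z⁆ := by
  simp only [Ring.lie_def, sub_mul, mul_sub]; abel
lemma add_lie' (x y z : (U3 ⊗[ℚ] U3) ⊗[ℚ] U3) : ⁅x + y, z⁆ = ⁅x,z⁆ + ⁅y,z⁆ := by
  simp only [Ring.lie_def, add_mul, mul_add]; abel
lemma smul_lie' (c : ℚ) (x z : (U3 ⊗[ℚ] U3) ⊗[ℚ] U3) : ⁅c • x, z⁆ = c • ⁅x,z⁆ := by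
  simp only [Ring.lie_def, smul_mul_assoc, mul_smul_comm, smul_sub]
lemma lie_smul' (c : ℚ) (x z : (U3 ⊗[ℚ] U3) ⊗[ℚ] U3) : ⁅x, c • z⁆ = c • ⁅x,z⁆ := by
  simp only [Ring.lie_def, smul_mul_assoc, mul_smul_comm, smul_sub]

/-- a ∧ b = a ⊗ b - b ⊗ a in U(sl(3)) ⊗ U(sl(3)) -/
noncomputable def wedge (a b : gl3) : U3 ⊗[ℚ] U3 :=
  ι3 a ⊗ₜ[ℚ] ι3 b - ι3 b ⊗ₜ[ℚ] ι3 a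

theorem sl3_jordanian_r_matrix_CYBE :
    let E : Fin 3 → Fin 3 → gl3 := fun i j => Matrix.single i j 1
    let H13 : gl3 := E 0 0 - E 2 2
    let r : U3 ⊗[ℚ] U3 := wedge H13 (E 0 2) + (2 : ℚ) • wedge (E 0 1) (E 1 2)
    ⁅p12 r, p13 r⁆ + ⁅p12 r, p23 r⁆ + ⁅p13 r, p23 r⁆ = 0 := by
  intro E H13 r
  simp only [r, wedge, map_add, map_sub, p12_smul, p13_smul, p23_smul,
    lie_add, add_lie', lie_sub, sub_lie', lie_smul', smul_lie',
    brk1213, brk1223, brk1323, comm3]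
  simp only [H13, E, Ring.lie_def, Matrix.sub_mul, Matrix.mul_sub,
    Matrix.single_mul_single_same, Matrix.single_mul_single_of_ne,
    ne_eq, Fin.reduceEq, not_false_eq_true, sub_zero, zero_sub, sub_self,
    sub_neg_eq_add, neg_sub, zero_add, add_zero, one_mul, mul_one]
  simp only [ι3_add, ι3_sub, ι3_smul, ι3_zero, one_smul,
    TensorProduct.add_tmul, TensorProduct.tmul_add, TensorProduct.sub_tmul,
    TensorProduct.tmul_sub, TensorProduct.smul_tmul', TensorProduct.tmul_smul,
    TensorProduct.zero_tmul, TensorProduct.tmul_zero, ι3_neg,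
    TensorProduct.neg_tmul, TensorProduct.tmul_neg]
  module
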